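/- Let T_k be the complete k-ary rooted tree of height k−1 (every non-leaf has exactly k children and all leaves are at distance k−1 from the root). Then for any unique-superior coloring of T_k with exactly k colors, for every 1 ≤ i ≤ k, color i is only used on vertices belonging to the bottom i levels (i.e., vertices at distance at least k−i from the root). -/

import Mathlib

/-- The vertices of the complete `k`-ary tree of height `k-1`: a vertex at level
`i` (distance `i` from the root) is a sequence of `i` child-choices in `Fin k`. -/
abbrev TreeVert (k : ℕ) := Σ i : Fin k, (Fin i.val → Fin k)

/-- The complete `k`-ary rooted tree of height `k-1`: every non-leaf has exactly
`k` children; a vertex is adjacent to another iff one is the parent of the other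
(extending the sequence by one choice). -/
def Tk (k : ℕ) : SimpleGraph (TreeVert k) :=
  SimpleGraph.fromRel (fun u v =>
    ∃ h : v.1.val = u.1.val + 1,
      ∀ t : Fin u.1.val, v.2 (Fin.cast h.symm t.castSucc) = u.2 t)

/-- A unique-superior coloring. -/
def IsUSColoring {V : Type*} (G : SimpleGraph V) (c : V → ℕ) : Prop :=
  (∀ u v, G.Adj u v → c u ≠ c v) ∧
  (∀ u v w, G.Adj u v → G.Adj v w → u ≠ w → c u = c w → c u < c v)

/-- auxiliary: the `j`-th child of a non-leaf vertex. -/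
def USchild {k : ℕ} (v : TreeVert k) (h : v.1.val + 1 < k) (j : Fin k) : TreeVert k :=
  ⟨⟨v.1.val + 1, h⟩, fun t => if ht : t.val < v.1.val then v.2 ⟨t.val, ht⟩ else j⟩

lemma USchild_adj {k : ℕ} (v : TreeVert k) (h : v.1.val + 1 < k) (j : Fin k) :
    (Tk k).Adj v (USchild v h j) := by
  rw [Tk, SimpleGraph.fromRel_adj]
  refine ⟨?_, Or.inl ⟨rfl, fun t => ?_⟩⟩
  · intro e
    have := congrArg (fun x : TreeVert k => x.1.val) e
    simp [USchild] at this
  · simp only [USchild]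
    rw [dif_pos]
    · rfl

lemma USchild_ne {k : ℕ} (v : TreeVert k) (h : v.1.val + 1 < k) {j j' : Fin k}
    (hjj : j ≠ j') : USchild v h j ≠ USchild v h j' := by
  intro e
  apply hjj
  have h2 : HEq (USchild v h j).2 (USchild v h j').2 := by rw [e]
  have h2' : (USchild v h j).2 = (USchild v h j').2 := eq_of_heq h2
  have := congrFun h2' ⟨v.1.val, Nat.lt_succ_self _⟩
  simpa [USchild] using this

/-- in any unique-superior coloring of `T_k` with the `k` colors
`{1,…,k}`, each color `i` appears only on the bottom `i` levels, i.e. each vertex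
`v` (at level `v.1`) satisfies `k - c v ≤ level(v)`. -/
theorem us_coloring_Tk_levels (k : ℕ) (hk : 1 ≤ k) (c : TreeVert k → ℕ)
    (hc : IsUSColoring (Tk k) c) (hrange : ∀ v, c v ∈ Finset.Icc 1 k) :
    ∀ v : TreeVert k, k - c v ≤ v.1.val := by
  have key : ∀ m : ℕ, ∀ v : TreeVert k, k - 1 - v.1.val ≤ m → k - c v ≤ v.1.val := by
    intro m
    induction m with
    | zero =>
      intro v hv
      have h1 := (Finset.mem_Icc.mp (hrange v)).1
      omega
    | succ m ih =>
      intro v hv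
      by_cases hlev : k - 1 - v.1.val ≤ m
      · exact ih v hlev
      · -- v is not a leaf
        have hi : v.1.val + 1 < k := by omega
        by_contra hcon
        push_neg at hcon
        have hcv1 := Finset.mem_Icc.mp (hrange v)
        -- child colors
        set f : Fin k → ℕ := fun j => c (USchild v hi j) with hf
        have hchild : ∀ j : Fin k, k - v.1.val - 1 ≤ f j ∧ f j ≤ k ∧ f j ≠ c v := by
          intro j
          have hr := Finset.mem_Icc.mp (hrange (USchild v hi j))
          have hih : k - f j ≤ v.1.val + 1 :=
            ih (USchild v hi j) (by show k - 1 - (v.1.val + 1) ≤ m; omega)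
          refine ⟨by omega, hr.2, ?_⟩
          exact (hc.1 v _ (USchild_adj v hi j)).symm
        have hinj : Function.Injective f := by
          intro j j' he
          by_contra hjj
          have hne := USchild_ne v hi hjj
          have hlt : f j < c v :=
            hc.2 _ v _ ((USchild_adj v hi j).symm) (USchild_adj v hi j') hne he
          have h1 := (hchild j).1
          omega
        have hcard : Fintype.card (Fin k) ≤
            ((Finset.Icc (k - v.1.val - 1) k).erase (c v)).card := by
          rw [← Finset.card_univ]
          apply Finset.card_le_card_of_injOn f
          · intro j _
            have := hchild j
            simp only [Finset.mem_coe, Finset.mem_erase, Finset.mem_Icc]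
            exact ⟨this.2.2, this.1, this.2.1⟩
          · exact hinj.injOn
        rw [Fintype.card_fin] at hcard
        have hIcc : (Finset.Icc (k - v.1.val - 1) k).card = v.1.val + 2 := by
          rw [Nat.card_Icc]; omega
        by_cases hmem : c v ∈ Finset.Icc (k - v.1.val - 1) k
        · rw [Finset.card_erase_of_mem hmem, hIcc] at hcard
          omega
        · rw [Finset.erase_eq_of_notMem hmem, hIcc] at hcard
          simp only [Finset.mem_Icc] at hmem
          omega
  intro v
  exact key (k - 1 - v.1.val) v le_rfl
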